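/- For every h ∈ {q_0+1,…,2q_0}, the element μ_h = hq − (2h−2q_0−1)q_0 − (q_0−1) of F_2 does not belong to the additive submonoid of ℕ generated by G ∖ {μ_h}, where G = G_1 ∪ F_2. -/

import Mathlib

/-- `q₀ = 2^s`. -/
def q0 (s : ℕ) : ℕ := 2 ^ s

/-- `q = 2 q₀²`. -/
def qS (s : ℕ) : ℕ := 2 * q0 s ^ 2

/-- `m_{j,k,ℓ} = ⌈(q₀/(q₀−1))·(j + k + ℓ − (k+ℓ)/q)⌉`. -/
def mval (s j k l : ℕ) : ℤ :=
  ⌈((q0 s : ℚ) / ((q0 s : ℚ) - 1)) *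
    ((j : ℚ) + (k : ℚ) + (l : ℚ) - ((k : ℚ) + (l : ℚ)) / (qS s : ℚ))⌉

/-- `F₁ = { hq − (ℓ+2k)q₀ − j : ℓ ∈ {0,1}, k,j ∈ {0,…,q₀−1},
    h ∈ {max{1, m_{j,k,ℓ}},…,2q₀} }`. -/
def F1 (s : ℕ) : Set ℕ :=
  {n | ∃ h j k l : ℕ, l ≤ 1 ∧ k < q0 s ∧ j < q0 s ∧
    max 1 (mval s j k l) ≤ (h : ℤ) ∧ h ≤ 2 * q0 s ∧
    n = h * qS s - (l + 2 * k) * q0 s - j}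

/-- `F₂ = { hq − (2h−2q₀−1)q₀ − (q₀−1) : h ∈ {q₀+1,…,2q₀} }`. -/
def F2 (s : ℕ) : Set ℕ :=
  {n | ∃ h : ℕ, q0 s + 1 ≤ h ∧ h ≤ 2 * q0 s ∧
    n = h * qS s - (2 * h - 2 * q0 s - 1) * q0 s - (q0 s - 1)}

/-- `G₁ = { hq − kq₀ − ⌊(2h−k−2)/2⌋ : h ∈ {1,…,q₀}, k ∈ {0,…,2h−2} }`. -/
def G1 (s : ℕ) : Set ℕ :=
  {n | ∃ h k : ℕ, 1 ≤ h ∧ h ≤ q0 s ∧ k ≤ 2 * h - 2 ∧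
    n = h * qS s - k * q0 s - (2 * h - k - 2) / 2}

set_option maxHeartbeats 1000000

lemma key_arith (Q h a b Hn Hm Ks E : ℤ) (hQ : 2 ≤ Q) (hh1 : Q + 1 ≤ h) (hh2 : h ≤ 2*Q)
    (ha : 0 ≤ a) (hb : 0 ≤ b) (hE0 : 0 ≤ E)
    (h1 : a ≤ Hn) (h2 : Hn ≤ a*Q) (h3 : (Q+1)*b ≤ Hm) (h4 : Hm ≤ 2*Q*b)
    (h5 : E ≤ Ks) (h6 : E ≤ a) (h7 : Ks + E + 2*a ≤ 2*Hn) (h8 : b = 1 → Hm ≠ h)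
    (heq : 2*(h*(2*Q^2) - 2*h*Q + 2*Q^2 + 1) =
      2*(Hn+Hm)*(2*Q^2) - 2*Ks*Q - (2*Hn - 2*a - Ks - E) - (4*Hm*Q - 2*b*(2*Q^2+1))) :
    False := by
  have hKs : 0 ≤ Ks := le_trans hE0 h5
  have hv : 0 ≤ 2*Hn - 2*a - Ks - E := by linarith
  have hsig : 0 ≤ (4*Hn - 4*a)*Q - (2*Ks*Q + (2*Hn - 2*a - Ks - E)) := by
    nlinarith [mul_nonneg (by linarith : (0:ℤ) ≤ 2*Hn - 2*a - Ks) (by linarith : (0:ℤ) ≤ 2*Q - 1)]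
  have hDn : 0 ≤ 2*Ks*Q + (2*Hn - 2*a - Ks - E) := by
    nlinarith [mul_nonneg hKs (by linarith : (0:ℤ) ≤ Q)]
  have hDm : 0 ≤ 4*Hm*Q - 2*b*(2*Q^2+1) := by
    nlinarith [mul_le_mul_of_nonneg_right h3 (by linarith : (0:ℤ) ≤ 4*Q),
      mul_nonneg hb (by linarith : (0:ℤ) ≤ 4*Q - 2)]
  have ht0 : 0 ≤ Hn + Hm - h := by
    have hq0 : (0:ℤ) < 2*Q^2 := by positivity
    have h5' : (h-1)*(2*Q^2) < (Hn+Hm)*(2*Q^2) := by nlinarith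
    have := lt_of_mul_lt_mul_right h5' (le_of_lt hq0)
    linarith
  have hq2Q : (4:ℤ) ≤ 2*Q^2 - 2*Q := by nlinarith
  have hT : 0 ≤ (Hn + Hm - h)*(2*Q^2 - 2*Q) := mul_nonneg ht0 (by linarith)
  have haQ : a ≤ a*Q := by nlinarith [mul_nonneg ha (by linarith : (0:ℤ) ≤ Q - 1)]
  have haQ0 : 0 ≤ a*Q := by linarith
  have star : 2*((Hn+Hm-h)*(2*Q^2-2*Q)) + 4*(a*Q) + 2*b*(2*Q^2+1)
      + ((4*Hn - 4*a)*Q - (2*Ks*Q + (2*Hn - 2*a - Ks - E))) = 2*(2*Q^2+1) := by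
    linear_combination -heq
  rcases (by omega : b = 0 ∨ b = 1 ∨ 2 ≤ b) with hb0 | hb1 | hb2
  · -- b = 0
    have hHm : Hm = 0 := by rw [hb0] at h3 h4; linarith
    rw [hb0, hHm] at star
    rcases (by omega : a = 0 ∨ a = 1 ∨ 2 ≤ a) with ha0 | ha1 | ha2
    · have : Hn = 0 := by rw [ha0] at h1 h2; linarith
      rw [hHm, this] at ht0; linarith
    · have : Hn ≤ Q := by rw [ha1] at h2; linarith
      rw [hHm] at ht0; linarith
    · -- a ≥ 2 : first t = 0
      have haQ2 : 2*Q ≤ a*Q := by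
        have := mul_nonneg (by linarith : (0:ℤ) ≤ a - 2) (by linarith : (0:ℤ) ≤ Q)
        linarith [this]
      have ht : Hn + Hm - h = 0 := by
        by_contra hne
        have ht1 : 1 ≤ Hn + Hm - h := by omega
        have hTT : 2*Q^2 - 2*Q ≤ (Hn + Hm - h)*(2*Q^2 - 2*Q) := by
          have := mul_le_mul_of_nonneg_right ht1 (by linarith : (0:ℤ) ≤ 2*Q^2 - 2*Q)
          linarith [this]
        rw [hHm] at hTT; linarith
      have hHn : Hn = h := by rw [hHm] at ht; linarith
      rw [hb0, hHm, hHn] at heq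
      have hm : (2*h - 2*a - Ks - E) + 2 = 2*Q*(2*h - 2*Q - Ks) := by
        linear_combination heq
      have hm1 : 1 ≤ 2*h - 2*Q - Ks := by
        by_contra hc
        push_neg at hc
        have hz : 2*Q*(2*h - 2*Q - Ks) ≤ 0 := by
          have := mul_nonneg (by linarith : (0:ℤ) ≤ 2*Q) (by linarith : (0:ℤ) ≤ -(2*h - 2*Q - Ks))
          nlinarith [this]
        have hv' : 0 ≤ 2*h - 2*a - Ks - E := by rw [hHn] at hv; linarith
        linarith
      have hP : 0 ≤ (2*h - 2*Q - Ks - 1)*(2*Q - 1) :=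
        mul_nonneg (by linarith) (by linarith)
      linarith [hm, hP, hE0, ha2, hQ]
  · -- b = 1
    have ha0 : a = 0 := by rw [hb1] at star; linarith
    have hHn : Hn = 0 := by rw [ha0] at h1 h2; linarith
    have hT0 : (Hn + Hm - h)*(2*Q^2 - 2*Q) ≤ 0 := by
      rw [hb1] at star; rw [ha0] at star; linarith
    have hth : Hn + Hm - h ≤ 0 := by
      by_contra hc
      push_neg at hc
      have : 2*Q^2 - 2*Q ≤ (Hn + Hm - h)*(2*Q^2 - 2*Q) := by
        have := mul_le_mul_of_nonneg_right (by omega : (1:ℤ) ≤ Hn + Hm - h)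
          (by linarith : (0:ℤ) ≤ 2*Q^2 - 2*Q)
        linarith [this]
      linarith
    exact h8 hb1 (by linarith)
  · have hbP : 0 ≤ (b-2)*(2*Q^2+1) :=
      mul_nonneg (by linarith) (by positivity)
    linarith [star, hT, haQ0, hsig, hbP]

lemma F2_cast (s h' : ℕ) (hQ : 2 ≤ q0 s) (hl : q0 s + 1 ≤ h') (hu : h' ≤ 2 * q0 s) :
    ((h' * qS s - (2 * h' - 2 * q0 s - 1) * q0 s - (q0 s - 1) : ℕ) : ℤ)
      = (h' : ℤ) * (2*(q0 s:ℤ)^2) - 2*(h':ℤ)*(q0 s:ℤ) + 2*(q0 s:ℤ)^2 + 1 := by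
  set Q := q0 s with hQdef
  have hq : qS s = 2*Q^2 := rfl
  have e1 : 2*h' - 2*Q - 1 ≤ 2*Q - 1 := by omega
  have e2 : (2*h' - 2*Q - 1)*Q ≤ (2*Q-1)*Q := Nat.mul_le_mul_right _ e1
  have e3 : (2*Q-1)*Q + (Q-1) + 1 ≤ h' * (2*Q^2) := by
    have h1' : 1 ≤ h' := by omega
    have : (2*Q-1)*Q + (Q-1) + 1 ≤ 2*Q^2 := by
      have : (2*Q-1)*Q + Q = 2*Q^2 := by
        have : 2*Q - 1 + 1 = 2*Q := by omega
        nlinarith [this]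
      omega
    calc (2*Q-1)*Q + (Q-1) + 1 ≤ 2*Q^2 := this
      _ = 1 * (2*Q^2) := (one_mul _).symm
      _ ≤ h' * (2*Q^2) := Nat.mul_le_mul_right _ h1'
  have hBC : (2*h'-2*Q-1)*Q + (Q-1) ≤ h' * qS s := by
    rw [hq]; omega
  have b1 : (2*h'-2*Q-1)*Q ≤ h' * qS s := le_trans (Nat.le_add_right _ _) hBC
  have b2 : (Q-1) ≤ h' * qS s - (2*h'-2*Q-1)*Q := Nat.le_sub_of_add_le (by omega)
  rw [Nat.cast_sub b2, Nat.cast_sub b1]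
  have c1 : (((2*h'-2*Q-1)*Q : ℕ) : ℤ) = (2*(h':ℤ)-2*(Q:ℤ)-1)*(Q:ℤ) := by
    have : ((2*h'-2*Q-1 : ℕ) : ℤ) = 2*(h':ℤ)-2*(Q:ℤ)-1 := by omega
    push_cast
    rw [this]
  have c2 : ((Q-1 : ℕ) : ℤ) = (Q:ℤ) - 1 := by omega
  have c3 : ((h' * qS s : ℕ) : ℤ) = (h':ℤ) * (2*(Q:ℤ)^2) := by
    rw [hq]; push_cast; ring
  rw [c1, c2, c3]; ring

lemma G1_cast (s h' k' : ℕ) (hQ : 2 ≤ q0 s) (h1 : 1 ≤ h') (h2 : h' ≤ q0 s)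
    (h3 : k' ≤ 2*h' - 2) :
    2 * ((h' * qS s - k' * q0 s - (2*h' - k' - 2)/2 : ℕ) : ℤ)
      = 2*(h':ℤ)*(2*(q0 s:ℤ)^2) - 2*(k':ℤ)*(q0 s:ℤ)
        - (2*(h':ℤ) - 2 - (k':ℤ) - ((k' % 2 : ℕ) : ℤ)) := by
  set Q := q0 s with hQdef
  have hq : qS s = 2*Q^2 := rfl
  have d1 : (2*h'-k'-2)/2 ≤ h' := by omega
  have d2 : k'*Q ≤ 2*h'*Q := Nat.mul_le_mul_right _ (by omega)
  have d3 : 2*h'*Q + h' ≤ h'*(2*Q^2) := by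
    have e : 2*Q ≤ Q^2 := by nlinarith
    have e2 : h'*(2*Q) ≤ h'*(Q^2) := Nat.mul_le_mul_left _ e
    have e3 : 2*Q ≤ 2*h'*Q := by
      calc 2*Q = 2*(1*Q) := by ring
        _ ≤ 2*(h'*Q) := by exact Nat.mul_le_mul_left _ (Nat.mul_le_mul_right _ h1)
        _ = 2*h'*Q := by ring
    have e4 : h' ≤ 2*h'*Q := by
      calc h' = h'*1 := (mul_one _).symm
        _ ≤ h'*(2*Q) := Nat.mul_le_mul_left _ (by omega)
        _ = 2*h'*Q := by ring
    nlinarith [e2]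
  have hBC : k'*Q + (2*h'-k'-2)/2 ≤ h' * qS s := by
    rw [hq]; omega
  have b1 : k'*Q ≤ h' * qS s := le_trans (Nat.le_add_right _ _) hBC
  have b2 : (2*h'-k'-2)/2 ≤ h' * qS s - k'*Q := Nat.le_sub_of_add_le (by omega)
  rw [Nat.cast_sub b2, Nat.cast_sub b1]
  have cC : 2 * (((2*h'-k'-2)/2 : ℕ) : ℤ)
      = 2*(h':ℤ) - 2 - (k':ℤ) - ((k' % 2 : ℕ) : ℤ) := by omega
  have c3 : ((h' * qS s : ℕ) : ℤ) = (h':ℤ) * (2*(Q:ℤ)^2) := by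
    rw [hq]; push_cast; ring
  rw [c3, Nat.cast_mul]
  linarith [cC]

def InvP14 (s h x : ℕ) : Prop :=
  ∃ a b Hn Hm Ks E : ℕ,
    a ≤ Hn ∧ Hn ≤ a * q0 s ∧ (q0 s + 1) * b ≤ Hm ∧ Hm ≤ 2 * q0 s * b ∧
    E ≤ Ks ∧ E ≤ a ∧ Ks + E + 2*a ≤ 2*Hn ∧ (b = 1 → Hm ≠ h) ∧
    2*((x:ℤ)) = 2*((Hn:ℤ)+(Hm:ℤ))*(2*(q0 s:ℤ)^2) - 2*(Ks:ℤ)*(q0 s:ℤ)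
      - (2*(Hn:ℤ) - 2*(a:ℤ) - (Ks:ℤ) - (E:ℤ))
      - (4*(Hm:ℤ)*(q0 s:ℤ) - 2*(b:ℤ)*(2*(q0 s:ℤ)^2+1))

/-- No `μ_h ∈ F₂` belongs to the submonoid generated by `(G₁ ∪ F₂) \ {μ_h}`. -/
theorem stmt14 (s : ℕ) (hs : 1 ≤ s) (h : ℕ)
    (hh₁ : q0 s + 1 ≤ h) (hh₂ : h ≤ 2 * q0 s) :
    h * qS s - (2 * h - 2 * q0 s - 1) * q0 s - (q0 s - 1) ∉
      AddSubmonoid.closure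
        ((G1 s ∪ F2 s) \ {h * qS s - (2 * h - 2 * q0 s - 1) * q0 s - (q0 s - 1)}) := by
  intro hmem
  have hQ : 2 ≤ q0 s := by
    have : 2^1 ≤ 2^s := Nat.pow_le_pow_right (by norm_num) hs
    simpa [q0] using this
  have main : InvP14 s h (h * qS s - (2 * h - 2 * q0 s - 1) * q0 s - (q0 s - 1)) := by
    refine AddSubmonoid.closure_induction (motive := fun x _ => InvP14 s h x) (fun y hy => ?_) ?_ (fun y z _ _ iy iz => ?_) hmem
    · -- mem case
      rcases hy with ⟨hyG, hyne⟩
      rw [Set.mem_singleton_iff] at hyne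
      rcases hyG with hG | hF
      · rcases hG with ⟨h', k', hh1', hh2', hk', rfl⟩
        refine ⟨1, 0, h', 0, k', k' % 2, by omega, by omega, by omega, by omega,
          by omega, by omega, by omega, by omega, ?_⟩
        have hc := G1_cast s h' k' hQ hh1' hh2' hk'
        push_cast at hc ⊢
        linarith [hc]
      · rcases hF with ⟨h'', hh1'', hh2'', rfl⟩
        refine ⟨0, 1, 0, h'', 0, 0, by omega, by omega, by omega, by omega,
          by omega, by omega, by omega, ?_, ?_⟩
        · intro _ hEq
          exact hyne (by rw [hEq])
        · have hc := F2_cast s h'' hQ hh1'' hh2''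
          push_cast at hc ⊢
          linarith [hc]
    · -- zero case
      refine ⟨0, 0, 0, 0, 0, 0, by omega, by omega, by omega, by omega,
        by omega, by omega, by omega, by omega, ?_⟩
      push_cast
      ring
    · -- add case
      rcases iy with ⟨a₁, b₁, Hn₁, Hm₁, Ks₁, E₁, c11, c12, c13, c14, c15, c16, c17, c18, e1⟩
      rcases iz with ⟨a₂, b₂, Hn₂, Hm₂, Ks₂, E₂, c21, c22, c23, c24, c25, c26, c27, c28, e2⟩
      refine ⟨a₁+a₂, b₁+b₂, Hn₁+Hn₂, Hm₁+Hm₂, Ks₁+Ks₂, E₁+E₂,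
        by omega, by linarith [c12, c22], by linarith [c13, c23], by linarith [c14, c24],
        by omega, by omega, by omega, ?_, ?_⟩
      · intro hb1
        rcases (by omega : b₁ = 1 ∧ b₂ = 0 ∨ b₁ = 0 ∧ b₂ = 1) with ⟨hx1, hx2⟩ | ⟨hx1, hx2⟩
        · have hz : Hm₂ = 0 := by rw [hx2] at c24; simpa using c24
          rw [hz, Nat.add_zero]
          exact c18 hx1
        · have hz : Hm₁ = 0 := by rw [hx1] at c14; simpa using c14
          rw [hz, Nat.zero_add]
          exact c28 hx2
      · push_cast
        push_cast at e1 e2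
        linarith [e1, e2]
  -- conclude with key_arith
  rcases main with ⟨a, b, Hn, Hm, Ks, E, c1, c2, c3, c4, c5, c6, c7, c8, e⟩
  have hmu := F2_cast s h hQ hh₁ hh₂
  rw [hmu] at e
  refine key_arith (q0 s : ℤ) (h : ℤ) (a : ℤ) (b : ℤ) (Hn : ℤ) (Hm : ℤ) (Ks : ℤ) (E : ℤ)
    (by exact_mod_cast hQ) (by exact_mod_cast hh₁) (by exact_mod_cast hh₂)
    (by positivity) (by positivity) (by positivity)
    (by exact_mod_cast c1) (by exact_mod_cast c2) (by exact_mod_cast c3)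
    (by exact_mod_cast c4) (by exact_mod_cast c5) (by exact_mod_cast c6)
    (by exact_mod_cast c7) ?_ ?_
  · intro hb hm
    exact c8 (by exact_mod_cast hb) (by exact_mod_cast hm)
  · linarith [e]
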